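/- Let G be a finite group acting by ring automorphisms on a commutative ring Λ, and let W be a Λ-module equipped with an action of G by additive automorphisms such that g • (λ • w) = (g • λ) • (g • w) for all g ∈ G, λ ∈ Λ, w ∈ W. Let α ∈ Λ and set ε := ∑_{g∈G} g • α. Then ε is G-invariant, the map w ↦ ε • w is a G-equivariant additive endomorphism of W, and for every n ≥ 1 the endomorphism it induces on the group cohomology Hⁿ(G, W) (with W regarded as a ℤ-linear representation of G) is zero. -/

import Mathlib

section helpers
variable {α : Sort*}

lemma my_contractNth_succ {n : ℕ} (op : α → α → α) (j : Fin (n+1)) (g : Fin (n+2) → α) (k : Fin n) :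
    Fin.contractNth j.succ op g k.succ = Fin.contractNth j op (fun i => g i.succ) k := by
  unfold Fin.contractNth
  simp only [Fin.val_succ]
  rcases lt_trichotomy (k:ℕ) (j:ℕ) with h|h|h
  · rw [if_pos (by omega), if_pos h]
    exact congrArg g (Fin.ext (by simp))
  · rw [if_neg (by omega), if_pos (by omega), if_neg (by omega), if_pos h]
    exact congrArg₂ op (congrArg g (Fin.ext (by simp))) rfl
  · rw [if_neg (by omega), if_neg (by omega), if_neg (by omega), if_neg (by omega)]

lemma my_prod_contractNth {M : Type*} [Monoid M] : ∀ {n : ℕ} (j : Fin n) (g : Fin (n+1) → M),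
    (List.ofFn (Fin.contractNth j.castSucc (· * ·) g)).prod = (List.ofFn g).prod := by
  intro n
  induction n with
  | zero => exact fun j => j.elim0
  | succ n ih =>
    intro j g
    induction j using Fin.cases with
    | zero =>
      rw [List.ofFn_succ, List.ofFn_succ, List.ofFn_succ, List.prod_cons, List.prod_cons,
        List.prod_cons, ← mul_assoc]
      refine congrArg₂ (· * ·) ?_ (congrArg List.prod (congrArg List.ofFn (funext fun k => ?_)))
      · rw [Fin.contractNth_apply_of_eq _ _ _ _ (by simp)]
        exact congrArg₂ (· * ·) (congrArg g (Fin.ext (by simp))) (congrArg g (Fin.ext (by simp)))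
      · rw [Fin.contractNth_apply_of_gt _ _ _ _ (by simp)]
    | succ j =>
      rw [List.ofFn_succ, List.ofFn_succ, List.prod_cons, List.prod_cons]
      refine congrArg₂ (· * ·) ?_ ?_
      · rw [Fin.contractNth_apply_of_lt _ _ _ _ (by simp)]
        exact congrArg g (Fin.ext (by simp))
      · rw [← ih j (fun i => g i.succ)]
        refine congrArg List.prod (congrArg List.ofFn (funext fun k => ?_))
        rw [show (Fin.castSucc j.succ) = (Fin.castSucc j).succ from Fin.ext (by simp)]
        exact my_contractNth_succ _ _ g k

variable {β : Type*}

lemma my_snoc_contract {m : ℕ} (op : β → β → β) (j : Fin m) (g : Fin (m+1) → β) (τ : β) :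
    Fin.contractNth (Fin.castSucc j).castSucc op (Fin.snoc g τ) =
      Fin.snoc (Fin.contractNth j.castSucc op g) τ := by
  funext k
  induction k using Fin.lastCases with
  | last =>
    rw [Fin.snoc_last, Fin.contractNth_apply_of_gt _ _ _ _ (by simp)]
    rw [show (Fin.last m).succ = Fin.last (m+1) from Fin.ext (by simp), Fin.snoc_last]
  | cast k =>
    rw [Fin.snoc_castSucc]
    unfold Fin.contractNth
    simp only [Fin.coe_castSucc]
    rcases lt_trichotomy (k:ℕ) (j:ℕ) with h|h|h
    · rw [if_pos h, if_pos h, show (Fin.castSucc k).castSucc = Fin.castSucc (k.castSucc) from rfl,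
        Fin.snoc_castSucc]
    · rw [if_neg (by omega), if_pos h, if_neg (by omega), if_pos h,
        show (Fin.castSucc k).castSucc = Fin.castSucc (k.castSucc) from rfl, Fin.snoc_castSucc,
        show (Fin.castSucc k).succ = Fin.castSucc (k.succ) from Fin.ext (by simp), Fin.snoc_castSucc]
    · rw [if_neg (by omega), if_neg (by omega), if_neg (by omega), if_neg (by omega),
        show (Fin.castSucc k).succ = Fin.castSucc (k.succ) from Fin.ext (by simp), Fin.snoc_castSucc]

lemma my_snoc_contract_last {m : ℕ} (op : β → β → β) (g : Fin (m+1) → β) (τ : β) :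
    Fin.contractNth (Fin.last m).castSucc op (Fin.snoc g τ) =
      Fin.snoc (fun i : Fin m => g i.castSucc) (op (g (Fin.last m)) τ) := by
  funext k
  induction k using Fin.lastCases with
  | last =>
    rw [Fin.snoc_last, Fin.contractNth_apply_of_eq _ _ _ _ (by simp)]
    rw [show ((Fin.last m) : Fin (m+1)).succ = Fin.last (m+1) from Fin.ext (by simp)]
    rw [Fin.snoc_castSucc, Fin.snoc_last]
  | cast k =>
    rw [Fin.snoc_castSucc, Fin.contractNth_apply_of_lt _ _ _ _ (by simp),
      show (Fin.castSucc k).castSucc = Fin.castSucc (k.castSucc) from rfl, Fin.snoc_castSucc]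

lemma my_snoc_succ {m : ℕ} (g : Fin (m+1) → β) (τ : β) :
    (fun i : Fin (m+1) => (Fin.snoc g τ : Fin (m+2) → β) i.succ) =
      Fin.snoc (fun i : Fin m => g i.succ) τ := by
  funext i
  induction i using Fin.lastCases with
  | last =>
    rw [Fin.snoc_last, show (Fin.last m).succ = Fin.last (m+1) from Fin.ext (by simp), Fin.snoc_last]
  | cast i =>
    rw [Fin.snoc_castSucc, show (Fin.castSucc i).succ = Fin.castSucc i.succ from Fin.ext (by simp),
      Fin.snoc_castSucc]

lemma my_snoc_cast {m : ℕ} (g : Fin (m+1) → β) (τ : β) :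
    (fun i : Fin (m+1) => (Fin.snoc g τ : Fin (m+2) → β) i.castSucc) = g := by
  funext i; rw [Fin.snoc_castSucc]

lemma my_snoc_zero {m : ℕ} (g : Fin (m+1) → β) (τ : β) :
    (Fin.snoc g τ : Fin (m+2) → β) 0 = g 0 := by
  rw [show (0 : Fin (m+2)) = Fin.castSucc 0 from rfl, Fin.snoc_castSucc]

lemma my_prod_succ {M : Type*} [Monoid M] {k : ℕ} (g : Fin (k+1) → M) :
    (List.ofFn g).prod = g 0 * (List.ofFn (fun i : Fin k => g i.succ)).prod := by
  rw [List.ofFn_succ, List.prod_cons]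

lemma my_prod_castSucc {M : Type*} [Monoid M] {k : ℕ} (g : Fin (k+1) → M) :
    (List.ofFn g).prod = (List.ofFn (fun i : Fin k => g i.castSucc)).prod * g (Fin.last k) := by
  rw [List.ofFn_succ', List.concat_eq_append, List.prod_append, List.prod_cons, List.prod_nil,
    mul_one]

end helpers

/-- The inhomogeneous coboundary of an `r`-cochain `f : Gʳ → W`:
`∂f(g₁,…,g_{r+1}) = g₁ • f(g₂,…,g_{r+1})
  + ∑_{j=1}^{r} (−1)^j f(g₁,…,g_{j−1}, g_j·g_{j+1}, g_{j+2},…,g_{r+1})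
  + (−1)^{r+1} f(g₁,…,g_r)`. -/
def coboundary {G W : Type*} [Group G] [AddCommGroup W] [DistribMulAction G W]
    {r : ℕ} (f : (Fin r → G) → W) : (Fin (r + 1) → G) → W :=
  fun g =>
    g 0 • f (fun i => g i.succ)
      + ∑ j : Fin r, ((-1 : ℤ) ^ ((j : ℕ) + 1)) • f (Fin.contractNth j.castSucc (· * ·) g)
      + ((-1 : ℤ) ^ (r + 1)) • f (fun i => g i.castSucc)

/-- Let a finite group `G` act by ring automorphisms on a commutative ring `Λ`, and let
`W` be a `Λ`-module with a semilinear additive `G`-action.  For `α ∈ Λ` set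
`ε := ∑ g ∈ G, g • α`.  Then `ε` is `G`-invariant, `w ↦ ε • w` is a `G`-equivariant
additive endomorphism of `W`, and the endomorphism it induces on the group cohomology
`Hⁿ(G, W)` is zero for every `n ≥ 1`: the `ε`-multiple of every inhomogeneous
`n`-cocycle is an inhomogeneous coboundary. -/
theorem stmt7 (G : Type*) [Group G] [Fintype G]
    (Λ : Type*) [CommRing Λ] [MulSemiringAction G Λ]
    (W : Type*) [AddCommGroup W] [Module Λ W] [DistribMulAction G W]
    (hsemi : ∀ (g : G) (l : Λ) (w : W), g • (l • w) = (g • l) • (g • w))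
    (α ε : Λ) (hε : ε = ∑ g : G, g • α) :
    (∀ g : G, g • ε = ε) ∧
    (∀ (g : G) (w : W), ε • (g • w) = g • (ε • w)) ∧
    (∀ w w' : W, ε • (w + w') = ε • w + ε • w') ∧
    (∀ (m : ℕ) (f : (Fin (m + 1) → G) → W), coboundary f = 0 →
      ∃ h : (Fin m → G) → W, (fun g => ε • f g) = coboundary h) := by
  have hgz : ∀ (g : G) (n : ℤ) (w : W), g • (n • w) = n • (g • w) := fun g n w =>
    AddMonoidHom.map_zsmul (DistribMulAction.toAddMonoidHom W g) n w
  have hinv : ∀ g : G, g • ε = ε := by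
    intro g
    rw [hε, Finset.smul_sum]
    simp_rw [smul_smul]
    exact Equiv.sum_comp (Equiv.mulLeft g) (fun τ : G => τ • α)
  refine ⟨hinv, fun g w => by rw [hsemi, hinv], fun w w' => smul_add ε w w', ?_⟩
  intro m f hf
  set s : ℤ := (-1) ^ (m+1) with hs
  set hh : (Fin m → G) → W :=
    fun x => s • ∑ τ : G, (((List.ofFn x).prod * τ) • α) • f (Fin.snoc x τ) with hhh
  refine ⟨hh, funext fun g => ?_⟩
  set P : G := (List.ofFn g).prod with hP
  -- the cocycle identity, rearranged
  have E : ∀ τ : G,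
      g 0 • f (Fin.snoc (fun i => g i.succ) τ)
        + ∑ j : Fin m, ((-1:ℤ) ^ ((j:ℕ)+1)) • f (Fin.snoc (Fin.contractNth j.castSucc (· * ·) g) τ)
        + s • f (Fin.snoc (fun i => g i.castSucc) (g (Fin.last m) * τ))
      = s • f g := by
    intro τ
    have h0 := congrFun hf (Fin.snoc g τ)
    simp only [coboundary, Pi.zero_apply] at h0
    rw [my_snoc_zero, my_snoc_succ, my_snoc_cast, Fin.sum_univ_castSucc] at h0
    simp only [Fin.coe_castSucc, Fin.val_last] at h0
    rw [my_snoc_contract_last] at h0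
    simp_rw [my_snoc_contract] at h0
    rw [pow_succ (-1 : ℤ) (m+1), mul_neg_one, neg_smul, ← hs] at h0
    rw [← sub_eq_zero, ← h0]
    abel
  -- Term A
  have hA : g 0 • hh (fun i => g i.succ)
      = s • ∑ τ : G, ((P * τ) • α) • (g 0 • f (Fin.snoc (fun i => g i.succ) τ)) := by
    rw [hhh, hgz, Finset.smul_sum]
    refine congrArg (s • ·) (Finset.sum_congr rfl fun τ _ => ?_)
    rw [hsemi, smul_smul, ← mul_assoc, ← my_prod_succ]
  -- Term B
  have hB : (∑ j : Fin m, ((-1:ℤ) ^ ((j:ℕ)+1)) • hh (Fin.contractNth j.castSucc (· * ·) g))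
      = s • ∑ τ : G, ((P * τ) • α) •
          (∑ j : Fin m, ((-1:ℤ) ^ ((j:ℕ)+1)) •
            f (Fin.snoc (Fin.contractNth j.castSucc (· * ·) g) τ)) := by
    rw [hhh]
    simp only [my_prod_contractNth, ← hP]
    rw [Finset.smul_sum]
    simp_rw [Finset.smul_sum, Finset.sum_comm (γ := G)]
    refine Finset.sum_congr rfl fun j _ => ?_
    refine Finset.sum_congr rfl fun x _ => ?_
    rw [smul_comm ((-1:ℤ) ^ ((j:ℕ)+1)) s, smul_comm ((-1:ℤ) ^ ((j:ℕ)+1)) ((P * x) • α)]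
  -- Term C
  have hC : s • hh (fun i => g i.castSucc)
      = s • ∑ τ : G, ((P * τ) • α) •
          (s • f (Fin.snoc (fun i => g i.castSucc) (g (Fin.last m) * τ))) := by
    have hC0 : ∑ τ : G, (((List.ofFn (fun i : Fin m => g i.castSucc)).prod * τ) • α) •
          f (Fin.snoc (fun i => g i.castSucc) τ)
        = ∑ τ : G, ((P * τ) • α) • f (Fin.snoc (fun i => g i.castSucc) (g (Fin.last m) * τ)) := by
      rw [← Equiv.sum_comp (Equiv.mulLeft (g (Fin.last m)))
        (fun σ : G => (((List.ofFn (fun i : Fin m => g i.castSucc)).prod * σ) • α) •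
          f (Fin.snoc (fun i => g i.castSucc) σ))]
      refine Finset.sum_congr rfl fun τ _ => ?_
      simp only [Equiv.coe_mulLeft]
      rw [← mul_assoc, ← my_prod_castSucc, ← hP]
    simp only [hhh]
    rw [hC0, Finset.smul_sum, Finset.smul_sum, Finset.smul_sum]
    refine Finset.sum_congr rfl fun τ _ => ?_
    exact congrArg (fun w : W => s • w) (smul_comm s ((P * τ) • α) _)
  -- assemble
  show ε • f g = coboundary hh g
  simp only [coboundary]
  rw [← hs]
  rw [hA, hB, hC, ← smul_add, ← smul_add, ← Finset.sum_add_distrib,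
    ← Finset.sum_add_distrib]
  simp_rw [← smul_add, E]
  have hss : ∀ w : W, s • s • w = w := fun w => by
    rw [smul_smul, ← pow_add, Even.neg_one_pow ⟨m+1, rfl⟩, one_smul]
  calc ε • f g = ∑ τ : G, ((P * τ) • α) • f g := by
        rw [← Finset.sum_smul, hε, ← Equiv.sum_comp (Equiv.mulLeft P) (fun τ : G => τ • α)]
        simp [smul_smul]
    _ = s • ∑ τ : G, ((P * τ) • α) • s • f g := by
        rw [Finset.smul_sum]
        refine Finset.sum_congr rfl fun τ _ => ?_
        rw [smul_comm s ((P * τ) • α), hss]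
    _ = _ := rfl
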